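/- Let T_x be a rooted tree with root x, and partition the children of x into classes C_1, …, C_t where two children u, v lie in the same class iff T_u and T_v are isomorphic as rooted trees; select a representative u_j of each class C_j. Then the number D(T_x; k) of equivalence classes of distinguishing k-colorings of T_x equals k · ∏_{j=1}^{t} binom(D(T_{u_j}; k), |C_j|). -/

import Mathlib

open SimpleGraph

noncomputable section

def ecc {V : Type*} [Fintype V] (G : SimpleGraph V) (v : V) : ℕ :=
  Finset.univ.sup fun u => G.dist u v

def graphCenter {V : Type*} [Fintype V] (G : SimpleGraph V) : Set V :=
  {v | ∀ u, ecc G v ≤ ecc G u}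

def desc {V : Type*} (G : SimpleGraph V) (x v : V) : Set V :=
  {u | G.dist u x = G.dist u v + G.dist v x}

lemma self_mem_desc {V : Type*} (G : SimpleGraph V) (x v : V) : v ∈ desc G x v := by
  simp [desc]

def Distinguishes {V α : Type*} (G : SimpleGraph V) (r : V) (φ : V → α) : Prop :=
  ∀ σ : G ≃g G, σ r = r → (∀ w, φ (σ w) = φ w) → ∀ w, σ w = w

def DistinguishesU {V α : Type*} (G : SimpleGraph V) (φ : V → α) : Prop :=
  ∀ σ : G ≃g G, (∀ w, φ (σ w) = φ w) → ∀ w, σ w = w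

def RootedIso {V W : Type*} (G : SimpleGraph V) (H : SimpleGraph W) (r : V) (s : W) : Prop :=
  ∃ π : G ≃g H, π r = s

def ColEquiv {V W α : Type*} (G : SimpleGraph V) (H : SimpleGraph W) (r : V) (s : W)
    (φ : V → α) (ψ : W → α) : Prop :=
  ∃ π : G ≃g H, π r = s ∧ ∀ w, φ w = ψ (π w)

def IsProper {V α : Type*} (G : SimpleGraph V) (φ : V → α) : Prop :=
  ∀ a b, G.Adj a b → φ a ≠ φ b

def DCount {V : Type*} (G : SimpleGraph V) (r : V) (k : ℕ) : ℕ :=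
  Nat.card (Quot fun φ ψ : {f : V → Fin k // Distinguishes G r f} =>
    ∃ σ : G ≃g G, σ r = r ∧ ∀ w, φ.1 w = ψ.1 (σ w))

def DCountL {V : Type*} (G : SimpleGraph V) (r : V) (L : V → Finset ℕ) : ℕ :=
  Nat.card (Quot fun φ ψ : {f : V → ℕ // (∀ v, f v ∈ L v) ∧ Distinguishes G r f} =>
    ∃ σ : G ≃g G, σ r = r ∧ ∀ w, φ.1 w = ψ.1 (σ w))

def DChiCount {V : Type*} (G : SimpleGraph V) (r : V) (k : ℕ) : ℕ :=
  Nat.card (Quot fun φ ψ : {f : V → Fin k // IsProper G f ∧ Distinguishes G r f} =>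
    ∃ σ : G ≃g G, σ r = r ∧ ∀ w, φ.1 w = ψ.1 (σ w))

def DChiCountI {V : Type*} (G : SimpleGraph V) (r : V) (k : ℕ) (i : Fin k) : ℕ :=
  Nat.card (Quot fun φ ψ : {f : V → Fin k // IsProper G f ∧ Distinguishes G r f ∧ f r = i} =>
    ∃ σ : G ≃g G, σ r = r ∧ ∀ w, φ.1 w = ψ.1 (σ w))

def DChiCountLI {V : Type*} (G : SimpleGraph V) (r : V) (L : V → Finset ℕ) (i : ℕ) : ℕ :=
  Nat.card (Quot fun φ ψ : {f : V → ℕ // (∀ v, f v ∈ L v) ∧ IsProper G f ∧ Distinguishes G r f ∧ f r = i} =>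
    ∃ σ : G ≃g G, σ r = r ∧ ∀ w, φ.1 w = ψ.1 (σ w))

def DNum {V : Type*} (G : SimpleGraph V) (r : V) : ℕ :=
  sInf {k | ∃ φ : V → Fin k, Distinguishes G r φ}

def DListNum {V : Type*} (G : SimpleGraph V) (r : V) : ℕ :=
  sInf {k | ∀ L : V → Finset ℕ, (∀ v, (L v).card = k) →
    ∃ φ : V → ℕ, (∀ v, φ v ∈ L v) ∧ Distinguishes G r φ}

def DNumU {V : Type*} (G : SimpleGraph V) : ℕ :=
  sInf {k | ∃ φ : V → Fin k, DistinguishesU G φ}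

def DListNumU {V : Type*} (G : SimpleGraph V) : ℕ :=
  sInf {k | ∀ L : V → Finset ℕ, (∀ v, (L v).card = k) →
    ∃ φ : V → ℕ, (∀ v, φ v ∈ L v) ∧ DistinguishesU G φ}

def chiD {V : Type*} (G : SimpleGraph V) (r : V) : ℕ :=
  sInf {k | ∃ φ : V → Fin k, IsProper G φ ∧ Distinguishes G r φ}

def chiDL {V : Type*} (G : SimpleGraph V) (r : V) : ℕ :=
  sInf {k | ∀ L : V → Finset ℕ, (∀ v, (L v).card = k) →
    ∃ φ : V → ℕ, (∀ v, φ v ∈ L v) ∧ IsProper G φ ∧ Distinguishes G r φ}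

def chiDU {V : Type*} (G : SimpleGraph V) : ℕ :=
  sInf {k | ∃ φ : V → Fin k, IsProper G φ ∧ DistinguishesU G φ}

def chiDLU {V : Type*} (G : SimpleGraph V) : ℕ :=
  sInf {k | ∀ L : V → Finset ℕ, (∀ v, (L v).card = k) →
    ∃ φ : V → ℕ, (∀ v, φ v ∈ L v) ∧ IsProper G φ ∧ DistinguishesU G φ}

def subdiv {V : Type*} (G : SimpleGraph V) (u v : V) : SimpleGraph (V ⊕ Unit) :=
  SimpleGraph.fromRel fun a b =>
    match a, b with
    | Sum.inl a, Sum.inl b => G.Adj a b ∧ ¬(a = u ∧ b = v) ∧ ¬(a = v ∧ b = u)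
    | Sum.inl a, Sum.inr _ => a = u ∨ a = v
    | Sum.inr _, _ => False

def childOf {V : Type*} (G : SimpleGraph V) (r v u : V) : Prop :=
  G.Adj v u ∧ G.dist u r = G.dist v r + 1
section TreeAux
variable {V : Type*} {G : SimpleGraph V}

open SimpleGraph Walk

def tpath (hG : G.IsTree) (a b : V) : G.Walk a b := (hG.existsUnique_path a b).choose

lemma tpath_isPath (hG : G.IsTree) (a b : V) : (tpath hG a b).IsPath :=
  (hG.existsUnique_path a b).choose_spec.1

lemma tpath_eq (hG : G.IsTree) {a b : V} (p : G.Walk a b) (hp : p.IsPath) : p = tpath hG a b :=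
  (hG.existsUnique_path a b).choose_spec.2 p hp

lemma isPath_length_eq_dist (hG : G.IsTree) {a b : V} (p : G.Walk a b) (hp : p.IsPath) :
    p.length = G.dist a b := by
  classical
  obtain ⟨q, hq⟩ := hG.isConnected.exists_walk_length_eq_dist a b
  have h3 : p.length = q.bypass.length := by
    rw [tpath_eq hG p hp, tpath_eq hG q.bypass q.bypass_isPath]
  have h4 := q.length_bypass_le
  have hd := SimpleGraph.dist_le p
  omega

lemma tpath_length (hG : G.IsTree) (a b : V) : (tpath hG a b).length = G.dist a b :=
  isPath_length_eq_dist hG _ (tpath_isPath hG a b)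

lemma mem_desc_iff (hG : G.IsTree) (x u v : V) :
    u ∈ desc G x v ↔ v ∈ (tpath hG u x).support := by
  constructor
  · intro h
    set p := (tpath hG u v).append (tpath hG v x) with hp
    have hlen : p.length = G.dist u x := by
      rw [hp, Walk.length_append, tpath_length, tpath_length]
      exact h.symm
    have hpath : p.IsPath := p.isPath_of_length_eq_dist hlen
    rw [← tpath_eq hG p hpath, hp, Walk.support_append]
    exact List.mem_append.mpr (Or.inl (Walk.end_mem_support _))
  · intro h
    classical
    have h1 := (tpath_isPath hG u x).takeUntil h
    have h2 := (tpath_isPath hG u x).dropUntil h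
    have h3 := congrArg Walk.length (Walk.take_spec (tpath hG u x) h)
    rw [Walk.length_append, isPath_length_eq_dist hG _ h1, isPath_length_eq_dist hG _ h2,
      tpath_length] at h3
    exact h3.symm

lemma x_not_mem_desc (hG : G.IsTree) {x v : V} (hxv : G.Adj x v) : x ∉ desc G x v := by
  intro h
  have h1 : G.dist v x = 1 := (SimpleGraph.dist_eq_one_iff_adj).mpr hxv.symm
  have := h
  simp only [desc, Set.mem_setOf_eq, SimpleGraph.dist_self, h1] at this
  omega

lemma mem_desc_ne_x (hG : G.IsTree) {x v u : V} (hxv : G.Adj x v) (h : u ∈ desc G x v) :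
    u ≠ x := fun e => x_not_mem_desc hG hxv (e ▸ h)

/-- parent-child: the child of x on the path from x to u -/
def par (hG : G.IsTree) (x u : V) : V := (tpath hG x u).getVert 1

lemma par_spec (hG : G.IsTree) {x u : V} (hne : u ≠ x) :
    G.Adj x (par hG x u) ∧ u ∈ desc G x (par hG x u) := by
  have hlp : 0 < (tpath hG x u).length := by
    rw [tpath_length]
    exact hG.isConnected.pos_dist_of_ne (Ne.symm hne)
  constructor
  · have := (tpath hG x u).adj_getVert_succ hlp
    rwa [Walk.getVert_zero] at this
  · rw [mem_desc_iff hG, ← tpath_eq hG (tpath hG x u).reverse (tpath_isPath hG x u).reverse,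
      Walk.support_reverse, List.mem_reverse]
    exact Walk.mem_support_iff_exists_getVert.mpr ⟨1, rfl, hlp⟩

lemma par_eq (hG : G.IsTree) {x u v : V} (hxv : G.Adj x v) (h : u ∈ desc G x v) :
    par hG x u = v := by
  have hvx : G.dist v x = 1 := SimpleGraph.dist_eq_one_iff_adj.mpr hxv.symm
  set q := (tpath hG u v).append (tpath hG v x) with hq
  have hlen : q.length = G.dist u x := by
    rw [hq, Walk.length_append, tpath_length, tpath_length]
    exact h.symm
  have hpath : q.IsPath := q.isPath_of_length_eq_dist hlen
  have hqt : q = tpath hG u x := tpath_eq hG q hpath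
  have hrev : tpath hG x u = q.reverse := (tpath_eq hG q.reverse hpath.reverse).symm
  have hl1 : (tpath hG u v).length = G.dist u v := tpath_length hG u v
  have hl2 : (tpath hG v x).length = 1 := by rw [tpath_length]; exact hvx
  have hql : q.length = (tpath hG u v).length + 1 := by
    rw [hq, Walk.length_append, hl2]
  have : par hG x u = q.getVert (q.length - 1) := by
    rw [par, hrev, Walk.getVert_reverse]
  rw [this, hq, Walk.getVert_append]
  have hlen' : ((tpath hG u v).append (tpath hG v x)).length - 1 = (tpath hG u v).length := by
    rw [Walk.length_append, hl2]
    omega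
  rw [hlen']
  simp [Walk.getVert_zero]

end TreeAux

section TreeAux2
variable {V : Type*} {G : SimpleGraph V}
open SimpleGraph Walk

lemma tpath_dichotomy (hG : G.IsTree) (x : V) {a b : V} (hab : G.Adj a b) :
    tpath hG a x = Walk.cons hab (tpath hG b x) ∨
      tpath hG b x = Walk.cons hab.symm (tpath hG a x) := by
  classical
  by_cases h : a ∈ (tpath hG b x).support
  · right
    have ht := (tpath_isPath hG b x).takeUntil h
    have hd := (tpath_isPath hG b x).dropUntil h
    have hspec := Walk.take_spec (tpath hG b x) h
    have e1 : (tpath hG b x).takeUntil a h = Walk.cons hab.symm Walk.nil := by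
      rw [tpath_eq hG _ ht, ← tpath_eq hG (Walk.cons hab.symm Walk.nil)
        ((Path.singleton hab.symm).2)]
    have e2 : (tpath hG b x).dropUntil a h = tpath hG a x := by
      rw [tpath_eq hG _ hd]
    rw [e1, e2] at hspec
    rw [← hspec]
    simp
  · left
    have hc : (Walk.cons hab (tpath hG b x)).IsPath :=
      (Walk.cons_isPath_iff hab (tpath hG b x)).mpr ⟨tpath_isPath hG b x, h⟩
    exact (tpath_eq hG _ hc).symm

lemma boundary (hG : G.IsTree) {x v a b : V} (hxv : G.Adj x v) (hab : G.Adj a b)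
    (ha : a ∈ desc G x v) (hb : b ∉ desc G x v) : a = v ∧ b = x := by
  rw [mem_desc_iff hG] at ha hb
  rcases tpath_dichotomy hG x hab with h | h
  · have hav : a = v := by
      rw [h, Walk.support_cons] at ha
      rcases List.mem_cons.mp ha with h' | h'
      · exact h'.symm
      · exact absurd h' hb
    subst hav
    have hl1 : (tpath hG a x).length = 1 := by
      rw [tpath_length]; exact SimpleGraph.dist_eq_one_iff_adj.mpr hxv.symm
    have hl2 := congrArg Walk.length h
    rw [hl1, Walk.length_cons, tpath_length] at hl2
    have : G.dist b x = 0 := by omega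
    exact ⟨rfl, (hG.isConnected.dist_eq_zero_iff).mp this⟩
  · exfalso
    apply hb
    rw [h, Walk.support_cons]
    exact List.mem_cons_of_mem _ ha

lemma dist_le_map {W : Type*} {H : SimpleGraph W} (f : G ≃g H) (a b : V) :
    H.dist (f a) (f b) ≤ G.dist a b := by
  by_cases h : G.Reachable a b
  · obtain ⟨p, hp⟩ := h.exists_walk_length_eq_dist
    calc H.dist (f a) (f b) ≤ (p.map f.toHom).length := SimpleGraph.dist_le _
      _ = p.length := Walk.length_map _ _
      _ = G.dist a b := hp
  · have h' : ¬ H.Reachable (f a) (f b) := by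
      intro ⟨q⟩
      exact h ⟨(q.map f.symm.toHom).copy (by simp) (by simp)⟩
    rw [SimpleGraph.dist_eq_zero_of_not_reachable h']
    exact Nat.zero_le _

lemma dist_map {W : Type*} {H : SimpleGraph W} (f : G ≃g H) (a b : V) :
    H.dist (f a) (f b) = G.dist a b := by
  refine le_antisymm (dist_le_map f a b) ?_
  have := dist_le_map f.symm (f a) (f b)
  simpa using this

lemma mem_desc_map (σ : G ≃g G) {x : V} (hx : σ x = x) (u v : V) :
    σ u ∈ desc G x (σ v) ↔ u ∈ desc G x v := by
  simp only [desc, Set.mem_setOf_eq]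
  rw [← hx, dist_map σ, dist_map σ, dist_map σ]
  rw [hx]

end TreeAux2

section Glue
variable {V : Type*} {G : SimpleGraph V}

/-- a child `b` of `x` that is also in `desc G x v` must be `v` itself -/
lemma child_mem_desc (hG : G.IsTree) {x v b : V} (hxv : G.Adj x v) (hxb : G.Adj x b)
    (h : b ∈ desc G x v) : b = v :=
  (boundary hG hxv hxb.symm h (x_not_mem_desc hG hxv)).1

lemma desc_disjoint (hG : G.IsTree) {x v w : V} (hxv : G.Adj x v) (hxw : G.Adj x w)
    (hvw : v ≠ w) {a : V} (ha : a ∈ desc G x v) : a ∉ desc G x w := fun h =>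
  hvw ((par_eq hG hxv ha).symm.trans (par_eq hG hxw h))

lemma glue' (hG : G.IsTree) [Finite V] (x : V) (f : V → V)
    (H1 : f x = x)
    (H2 : ∀ v, G.Adj x v → G.Adj x (f v))
    (H3 : ∀ v, G.Adj x v → ∀ a ∈ desc G x v, f a ∈ desc G x (f v))
    (H4 : Function.Injective f)
    (H5 : ∀ a c : V, a ≠ x → c ≠ x → par hG x a = par hG x c →
      (G.Adj a c ↔ G.Adj (f a) (f c))) :
    ∃ σ : G ≃g G, σ x = x ∧ ∀ a, σ a = f a := by
  classical
  have Kmem : ∀ a : V, a ≠ x → f a ∈ desc G x (f (par hG x a)) := fun a ha =>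
    H3 _ (par_spec hG ha).1 a (par_spec hG ha).2
  have Kchild : ∀ a : V, a ≠ x → G.Adj x (f (par hG x a)) := fun a ha =>
    H2 _ (par_spec hG ha).1
  have Kne : ∀ a : V, a ≠ x → f a ≠ x := fun a ha =>
    mem_desc_ne_x hG (Kchild a ha) (Kmem a ha)
  have Kpar : ∀ a : V, a ≠ x → par hG x (f a) = f (par hG x a) := fun a ha =>
    par_eq hG (Kchild a ha) (Kmem a ha)
  have hAdjF : ∀ a c : V, G.Adj a c → G.Adj (f a) (f c) := by
    intro a c hac
    by_cases ha : a = x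
    · have hxc : G.Adj x c := ha ▸ hac
      rw [ha, H1]
      exact H2 c hxc
    · by_cases hc : c = x
      · have hax : G.Adj x a := hc ▸ hac.symm
        rw [hc, H1]
        exact (H2 a hax).symm
      · have hv := (par_spec hG ha).1
        have ham := (par_spec hG ha).2
        have hcm : c ∈ desc G x (par hG x a) := by
          by_contra hcn
          exact hc (boundary hG hv hac ham hcn).2
        exact (H5 a c ha hc (par_eq hG hv hcm).symm).mp hac
  have hAdjR : ∀ a c : V, G.Adj (f a) (f c) → G.Adj a c := by
    intro a c hfc
    by_cases ha : a = x
    · rw [ha, H1] at hfc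
      by_cases hc : c = x
      · rw [hc, H1] at hfc; exact absurd hfc (G.irrefl)
      · have h1 : f c = f (par hG x c) :=
          child_mem_desc hG (Kchild c hc) hfc (Kmem c hc)
        have : c = par hG x c := H4 h1
        rw [ha, this]
        exact (par_spec hG hc).1
    · by_cases hc : c = x
      · rw [hc, H1] at hfc
        have h1 : f a = f (par hG x a) :=
          child_mem_desc hG (Kchild a ha) hfc.symm (Kmem a ha)
        have : a = par hG x a := H4 h1
        rw [hc, this]
        exact ((par_spec hG ha).1).symm
      · have hvv : par hG x a = par hG x c := by
          by_contra hne
          have hfne : f (par hG x a) ≠ f (par hG x c) := fun h => hne (H4 h)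
          have hbne : f c ∉ desc G x (f (par hG x a)) :=
            desc_disjoint hG (Kchild c hc) (Kchild a ha) hfne.symm (Kmem c hc)
          exact Kne c hc (boundary hG (Kchild a ha) hfc (Kmem a ha) hbne).2
        exact (H5 a c ha hc hvv).mpr hfc
  have hbij : Function.Bijective f := Finite.injective_iff_bijective.mp H4
  exact ⟨⟨Equiv.ofBijective f hbij, fun {a c} => ⟨hAdjR a c, hAdjF a c⟩⟩, H1, fun _ => rfl⟩

end Glue

section Autos
variable {V : Type*} {G : SimpleGraph V}

/-- extend an automorphism of a subtree by the identity -/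
lemma extend_iso (hG : G.IsTree) [Finite V] {x v : V} (hxv : G.Adj x v)
    (τ : G.induce (desc G x v) ≃g G.induce (desc G x v))
    (hτ : (τ ⟨v, self_mem_desc G x v⟩ : V) = v) :
    ∃ σ : G ≃g G, σ x = x ∧ (∀ a (ha : a ∈ desc G x v), σ a = (τ ⟨a, ha⟩ : V)) ∧
      ∀ a, a ∉ desc G x v → σ a = a := by
  classical
  set f : V → V := fun a => if h : a ∈ desc G x v then (τ ⟨a, h⟩ : V) else a with hf
  have hfmem : ∀ a (h : a ∈ desc G x v), f a = (τ ⟨a, h⟩ : V) := fun a h => dif_pos h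
  have hfnot : ∀ a, a ∉ desc G x v → f a = a := fun a h => dif_neg h
  have hfv : f v = v := by rw [hfmem v (self_mem_desc G x v), hτ]
  obtain ⟨σ, h1, h2⟩ := glue' hG x f
    (hfnot x (x_not_mem_desc hG hxv))
    (by -- H2
      intro w hxw
      by_cases h : w ∈ desc G x v
      · rw [child_mem_desc hG hxv hxw h, hfv]; exact hxv
      · rw [hfnot w h]; exact hxw)
    (by -- H3
      intro w hxw a ha
      by_cases h : w ∈ desc G x v
      · have hwv : w = v := child_mem_desc hG hxv hxw h
        subst hwv
        rw [hfv, hfmem a ha]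
        exact Subtype.coe_prop _
      · have hwv : w ≠ v := fun e => h (e ▸ self_mem_desc G x v)
        have hna : a ∉ desc G x v := desc_disjoint hG hxw hxv hwv ha
        rw [hfnot w h, hfnot a hna]
        exact ha)
    (by -- H4
      intro a c hac
      by_cases ha : a ∈ desc G x v <;> by_cases hc : c ∈ desc G x v
      · rw [hfmem a ha, hfmem c hc] at hac
        exact congrArg Subtype.val (τ.toEquiv.injective (Subtype.ext hac))
      · rw [hfmem a ha, hfnot c hc] at hac
        exact absurd (hac ▸ Subtype.coe_prop (τ ⟨a, ha⟩)) hc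
      · rw [hfnot a ha, hfmem c hc] at hac
        exact absurd (hac.symm ▸ Subtype.coe_prop (τ ⟨c, hc⟩)) ha
      · rwa [hfnot a ha, hfnot c hc] at hac)
    (by -- H5
      intro a c hax hcx hpar
      by_cases h : a ∈ desc G x v
      · have hpv : par hG x a = v := par_eq hG hxv h
        have hcmem : c ∈ desc G x v := by
          have := (par_spec hG hcx).2
          rwa [← hpar, hpv] at this
        rw [hfmem a h, hfmem c hcmem]
        exact (τ.map_rel_iff (a := ⟨a, h⟩) (b := ⟨c, hcmem⟩)).symm
      · have hcn : c ∉ desc G x v := by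
          intro hcm
          apply h
          have := (par_spec hG hax).2
          rwa [hpar, par_eq hG hxv hcm] at this
        rw [hfnot a h, hfnot c hcn])
  refine ⟨σ, h1, fun a ha => ?_, fun a ha => ?_⟩
  · rw [h2 a, hfmem a ha]
  · rw [h2 a, hfnot a ha]

/-- swap two sibling subtrees along a rooted isomorphism -/
lemma swap_iso (hG : G.IsTree) [Finite V] {x v w : V} (hxv : G.Adj x v) (hxw : G.Adj x w)
    (hvw : v ≠ w) (ρ : G.induce (desc G x v) ≃g G.induce (desc G x w))
    (hρ : (ρ ⟨v, self_mem_desc G x v⟩ : V) = w) :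
    ∃ σ : G ≃g G, σ x = x ∧ (∀ a (ha : a ∈ desc G x v), σ a = (ρ ⟨a, ha⟩ : V)) ∧
      (∀ a (ha : a ∈ desc G x w), σ a = (ρ.symm ⟨a, ha⟩ : V)) ∧
      ∀ a, a ∉ desc G x v → a ∉ desc G x w → σ a = a := by
  classical
  have hρ' : (ρ.symm ⟨w, self_mem_desc G x w⟩ : V) = v := by
    have : (⟨w, self_mem_desc G x w⟩ : ↥(desc G x w)) = ρ ⟨v, self_mem_desc G x v⟩ :=
      Subtype.ext hρ.symm
    rw [this, RelIso.symm_apply_apply]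
  set f : V → V := fun a =>
    if h : a ∈ desc G x v then (ρ ⟨a, h⟩ : V)
    else if h' : a ∈ desc G x w then (ρ.symm ⟨a, h'⟩ : V) else a with hf
  have hfv : ∀ a (h : a ∈ desc G x v), f a = (ρ ⟨a, h⟩ : V) := fun a h => dif_pos h
  have hfw : ∀ a (h : a ∈ desc G x w), f a = (ρ.symm ⟨a, h⟩ : V) := fun a h => by
    have hnv : a ∉ desc G x v := desc_disjoint hG hxw hxv hvw.symm h
    rw [hf]; simp only [dif_neg hnv, dif_pos h]
  have hfnot : ∀ a, a ∉ desc G x v → a ∉ desc G x w → f a = a := fun a h h' => by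
    rw [hf]; simp only [dif_neg h, dif_neg h']
  have hfvw : f v = w := by rw [hfv v (self_mem_desc G x v), hρ]
  have hfwv : f w = v := by rw [hfw w (self_mem_desc G x w), hρ']
  have hmemv : ∀ a (h : a ∈ desc G x v), f a ∈ desc G x w := fun a h => by
    rw [hfv a h]; exact Subtype.coe_prop _
  have hmemw : ∀ a (h : a ∈ desc G x w), f a ∈ desc G x v := fun a h => by
    rw [hfw a h]; exact Subtype.coe_prop _
  obtain ⟨σ, h1, h2⟩ := glue' hG x f
    (hfnot x (x_not_mem_desc hG hxv) (x_not_mem_desc hG hxw))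
    (by
      intro z hxz
      by_cases h : z ∈ desc G x v
      · rw [child_mem_desc hG hxv hxz h, hfvw]; exact hxw
      · by_cases h' : z ∈ desc G x w
        · rw [child_mem_desc hG hxw hxz h', hfwv]; exact hxv
        · rw [hfnot z h h']; exact hxz)
    (by
      intro z hxz a ha
      by_cases h : z ∈ desc G x v
      · have hzv := child_mem_desc hG hxv hxz h
        subst hzv
        rw [hfvw]
        exact hmemv a ha
      · by_cases h' : z ∈ desc G x w
        · have hzw := child_mem_desc hG hxw hxz h'
          subst hzw
          rw [hfwv]
          exact hmemw a ha
        · have hzv : z ≠ v := fun e => h (e ▸ self_mem_desc G x v)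
          have hzw : z ≠ w := fun e => h' (e ▸ self_mem_desc G x w)
          have hna : a ∉ desc G x v := desc_disjoint hG hxz hxv hzv ha
          have hna' : a ∉ desc G x w := desc_disjoint hG hxz hxw hzw ha
          rw [hfnot z h h', hfnot a hna hna']
          exact ha)
    (by
      intro a c hac
      have key : ∀ z : V, z ∈ desc G x v → z ∉ desc G x w :=
        fun z hz => desc_disjoint hG hxv hxw hvw hz
      by_cases ha : a ∈ desc G x v <;> by_cases hc : c ∈ desc G x v
      · rw [hfv a ha, hfv c hc] at hac
        exact congrArg Subtype.val (ρ.toEquiv.injective (Subtype.ext hac))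
      · by_cases hc' : c ∈ desc G x w
        · rw [hfv a ha, hfw c hc'] at hac
          exact absurd (hac ▸ Subtype.coe_prop (ρ ⟨a, ha⟩))
            (key _ (Subtype.coe_prop (ρ.symm ⟨c, hc'⟩)))
        · rw [hfv a ha, hfnot c hc hc'] at hac
          exact absurd (hac ▸ Subtype.coe_prop (ρ ⟨a, ha⟩)) hc'
      · by_cases ha' : a ∈ desc G x w
        · rw [hfw a ha', hfv c hc] at hac
          exact absurd (hac.symm ▸ Subtype.coe_prop (ρ ⟨c, hc⟩))
            (key _ (Subtype.coe_prop (ρ.symm ⟨a, ha'⟩)))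
        · rw [hfnot a ha ha', hfv c hc] at hac
          exact absurd (hac.symm ▸ Subtype.coe_prop (ρ ⟨c, hc⟩)) ha'
      · by_cases ha' : a ∈ desc G x w <;> by_cases hc' : c ∈ desc G x w
        · rw [hfw a ha', hfw c hc'] at hac
          exact congrArg Subtype.val (ρ.symm.toEquiv.injective (Subtype.ext hac))
        · rw [hfw a ha', hfnot c hc hc'] at hac
          exact absurd (hac ▸ Subtype.coe_prop (ρ.symm ⟨a, ha'⟩)) hc
        · rw [hfnot a ha ha', hfw c hc'] at hac
          exact absurd (hac.symm ▸ Subtype.coe_prop (ρ.symm ⟨c, hc'⟩)) ha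
        · rwa [hfnot a ha ha', hfnot c hc hc'] at hac)
    (by
      intro a c hax hcx hpar
      by_cases h : a ∈ desc G x v
      · have hcm : c ∈ desc G x v := by
          have := (par_spec hG hcx).2
          rwa [← hpar, par_eq hG hxv h] at this
        rw [hfv a h, hfv c hcm]
        exact (ρ.map_rel_iff (a := ⟨a, h⟩) (b := ⟨c, hcm⟩)).symm
      · by_cases h' : a ∈ desc G x w
        · have hcm : c ∈ desc G x w := by
            have := (par_spec hG hcx).2
            rwa [← hpar, par_eq hG hxw h'] at this
          rw [hfw a h', hfw c hcm]
          exact (ρ.symm.map_rel_iff (a := ⟨a, h'⟩) (b := ⟨c, hcm⟩)).symm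
        · have hcnv : c ∉ desc G x v := by
            intro hcm
            exact h (by have := (par_spec hG hax).2; rwa [hpar, par_eq hG hxv hcm] at this)
          have hcnw : c ∉ desc G x w := by
            intro hcm
            exact h' (by have := (par_spec hG hax).2; rwa [hpar, par_eq hG hxw hcm] at this)
          rw [hfnot a h h', hfnot c hcnv hcnw])
  refine ⟨σ, h1, fun a ha => by rw [h2 a, hfv a ha], fun a ha => by rw [h2 a, hfw a ha],
    fun a ha ha' => by rw [h2 a, hfnot a ha ha']⟩

end Autos

section Rel

lemma quot_mk_eq_iff {α : Type*} {R : α → α → Prop} (h : Equivalence R) (a b : α) :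
    Quot.mk R a = Quot.mk R b ↔ R a b := by
  rw [Quot.eq]
  exact h.eqvGen_iff

lemma DRel_equivalence {W α : Type*} (H : SimpleGraph W) (r : W) :
    Equivalence (fun φ ψ : {f : W → α // Distinguishes H r f} =>
      ∃ σ : H ≃g H, σ r = r ∧ ∀ w, φ.1 w = ψ.1 (σ w)) := by
  constructor
  · intro φ
    exact ⟨RelIso.refl H.Adj, rfl, fun w => rfl⟩
  · rintro φ ψ ⟨σ, hr, hc⟩
    refine ⟨σ.symm, σ.toEquiv.symm_apply_eq.mpr hr.symm, fun w => ?_⟩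
    have := hc (σ.symm w)
    rw [RelIso.apply_symm_apply] at this
    exact this.symm
  · rintro φ ψ χ ⟨σ, hσ, h1⟩ ⟨τ, hτ, h2⟩
    refine ⟨σ.trans τ, ?_, fun w => (h1 w).trans (h2 (σ w))⟩
    show τ (σ r) = r
    rw [hσ, hτ]

lemma distinguishes_transport {W W' α : Type*} {H : SimpleGraph W} {H' : SimpleGraph W'}
    (π : H' ≃g H) {r' : W'} {r : W} (hr : π r' = r) (φ : W → α)
    (h : Distinguishes H r φ) : Distinguishes H' r' (fun a => φ (π a)) := by
  intro τ hτr hτc w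
  have hσ : Distinguishes H r φ := h
  set σ : H ≃g H := (π.symm.trans τ).trans π with hσdef
  have happ : ∀ z, σ z = π (τ (π.symm z)) := fun z => rfl
  have hroot : σ r = r := by rw [happ, ← hr, RelIso.symm_apply_apply, hτr, hr]
  have hcol : ∀ z, φ (σ z) = φ z := by
    intro z
    rw [happ]
    have := hτc (π.symm z)
    simp only at this
    rw [this, RelIso.apply_symm_apply]
  have hid := h σ hroot hcol (π w)
  rw [happ, RelIso.symm_apply_apply] at hid
  exact π.toEquiv.injective hid

end Rel

section Restrict
variable {V : Type*} {G : SimpleGraph V}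

def restrictIso (σ : G ≃g G) {s t : Set V} (h : ∀ a : V, a ∈ s ↔ σ a ∈ t) :
    G.induce s ≃g G.induce t :=
  ⟨Equiv.subtypeEquiv σ.toEquiv h, σ.map_rel_iff⟩

lemma restrictIso_coe (σ : G ≃g G) {s t : Set V} (h : ∀ a : V, a ∈ s ↔ σ a ∈ t)
    (a : ↥s) : (restrictIso σ h a : V) = σ a := rfl

lemma child_map (σ : G ≃g G) {x v : V} (hx : σ x = x) (hxv : G.Adj x v) :
    G.Adj x (σ v) := by
  rw [← hx]
  exact σ.map_rel_iff.mpr hxv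

def restrictAut (σ : G ≃g G) {x : V} (hx : σ x = x) (v : V) :
    G.induce (desc G x v) ≃g G.induce (desc G x (σ v)) :=
  restrictIso σ (fun a => (mem_desc_map σ hx a v).symm)

lemma restrictAut_coe (σ : G ≃g G) {x : V} (hx : σ x = x) (v : V) (a : ↥(desc G x v)) :
    (restrictAut σ hx v a : V) = σ a := rfl

lemma distinguishes_restrict (hG : G.IsTree) [Finite V] {x v : V} (hxv : G.Adj x v)
    {α : Type*} {φ : V → α} (h : Distinguishes G x φ) :
    Distinguishes (G.induce (desc G x v)) ⟨v, self_mem_desc G x v⟩ (fun a => φ a) := by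
  intro τ hroot hcol w
  obtain ⟨σ, hσx, hpiece, hout⟩ := extend_iso hG hxv τ (congrArg Subtype.val hroot)
  have hcols : ∀ a, φ (σ a) = φ a := by
    intro a
    by_cases hmem : a ∈ desc G x v
    · rw [hpiece a hmem]; exact hcol ⟨a, hmem⟩
    · rw [hout a hmem]
  have hid := h σ hσx hcols
  apply Subtype.ext
  have h1 := hpiece w.1 w.2
  have h2 := hid w.1
  rw [h2] at h1
  rw [← h1]

lemma cls_inj (hG : G.IsTree) [Finite V] {x v w : V} (hxv : G.Adj x v) (hxw : G.Adj x w)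
    {α : Type*} {φ : V → α} (hφ : Distinguishes G x φ)
    (ρ : G.induce (desc G x v) ≃g G.induce (desc G x w))
    (hρroot : (ρ ⟨v, self_mem_desc G x v⟩ : V) = w)
    (hcols : ∀ a : ↥(desc G x v), φ ↑a = φ ↑(ρ a)) : v = w := by
  by_contra hvw
  obtain ⟨σ, hσx, hp1, hp2, hp3⟩ := swap_iso hG hxv hxw hvw ρ hρroot
  have hcols' : ∀ a, φ (σ a) = φ a := by
    intro a
    by_cases h1 : a ∈ desc G x v
    · rw [hp1 a h1]; exact (hcols ⟨a, h1⟩).symm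
    · by_cases h2 : a ∈ desc G x w
      · rw [hp2 a h2]
        have := hcols (ρ.symm ⟨a, h2⟩)
        rw [RelIso.apply_symm_apply] at this
        exact this
      · rw [hp3 a h1 h2]
  have := hφ σ hσx hcols' v
  rw [hp1 v (self_mem_desc G x v), hρroot] at this
  exact hvw this.symm

end Restrict

lemma card_finset_subtype {Q : Type*} [Finite Q] (n : ℕ) :
    Nat.card {s : Finset Q // s.card = n} = (Nat.card Q).choose n := by
  classical
  letI : Fintype Q := Fintype.ofFinite Q
  have e : {s : Finset Q // s.card = n} ≃ ↥(Finset.univ.powersetCard n : Finset (Finset Q)) :=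
    Equiv.subtypeEquivRight (fun s => by simp [Finset.mem_powersetCard, Finset.subset_univ])
  rw [Nat.card_congr e, Nat.card_eq_finsetCard, Finset.card_powersetCard, Finset.card_univ,
    Nat.card_eq_fintype_card]

def SubT {W : Type*} (H : SimpleGraph W) (r : W) (k : ℕ) := {f : W → Fin k // Distinguishes H r f}

def RelT {W : Type*} (H : SimpleGraph W) (r : W) (k : ℕ) : SubT H r k → SubT H r k → Prop :=
  fun φ ψ => ∃ σ : H ≃g H, σ r = r ∧ ∀ w, φ.1 w = ψ.1 (σ w)

lemma DCount_eq {W : Type*} (H : SimpleGraph W) (r : W) (k : ℕ) :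
    DCount H r k = Nat.card (Quot (RelT H r k)) := rfl

lemma RelT_equivalence {W : Type*} (H : SimpleGraph W) (r : W) (k : ℕ) :
    Equivalence (RelT H r k) := DRel_equivalence H r

lemma relT_mk_eq {W : Type*} {H : SimpleGraph W} {r : W} {k : ℕ} (φ ψ : SubT H r k) :
    Quot.mk (RelT H r k) φ = Quot.mk (RelT H r k) ψ ↔ RelT H r k φ ψ :=
  quot_mk_eq_iff (RelT_equivalence H r k) φ ψ

instance SubT.finite {W : Type*} [Finite W] {H : SimpleGraph W} {r : W} {k : ℕ} :
    Finite (SubT H r k) := Subtype.finite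


set_option maxHeartbeats 1600000 in
theorem stmt5 {V : Type*} [Fintype V] (G : SimpleGraph V) (hG : G.IsTree)
    (x : V) (k t : ℕ) (C : Fin t → Finset V) (u : Fin t → V)
    (hC1 : ∀ j, ∀ v ∈ C j, G.Adj x v)
    (hC2 : ∀ v : V, G.Adj x v → ∃! j, v ∈ C j)
    (hC3 : ∀ j, ∀ v ∈ C j, ∀ w ∈ C j,
      RootedIso (G.induce (desc G x v)) (G.induce (desc G x w))
        ⟨v, self_mem_desc G x v⟩ ⟨w, self_mem_desc G x w⟩)
    (hC4 : ∀ j j', j ≠ j' → ∀ v ∈ C j, ∀ w ∈ C j',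
      ¬ RootedIso (G.induce (desc G x v)) (G.induce (desc G x w))
          ⟨v, self_mem_desc G x v⟩ ⟨w, self_mem_desc G x w⟩)
    (hu : ∀ j, u j ∈ C j) :
    DCount G x k =
      k * ∏ j : Fin t,
        Nat.choose
          (DCount (G.induce (desc G x (u j))) ⟨u j, self_mem_desc G x (u j)⟩ k)
          (C j).card := by
  classical
  -- chosen rooted isomorphisms from the representative subtree to each member
  choose ρ hρroot using fun j v (hv : v ∈ C j) => hC3 j (u j) (hu j) v hv
  have hρrootc : ∀ j v (hv : v ∈ C j), ((ρ j v hv ⟨u j, self_mem_desc G x (u j)⟩ : _) : V) = v :=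
    fun j v hv => congrArg Subtype.val (hρroot j v hv)
  have hρsymm : ∀ j v (hv : v ∈ C j),
      (ρ j v hv).symm ⟨v, self_mem_desc G x v⟩ = ⟨u j, self_mem_desc G x (u j)⟩ := by
    intro j v hv
    rw [← hρroot j v hv, RelIso.symm_apply_apply]
  -- class index of each child
  choose jv hjvmem using fun v (h : G.Adj x v) => (hC2 v h).exists
  have hjv_eq : ∀ (v) (h : G.Adj x v) j (hv : v ∈ C j), jv v h = j := by
    intro v h j hv
    obtain ⟨j0, hj0, hun⟩ := hC2 v h
    rw [hun _ (hjvmem v h), hun _ hv]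
  have jv_congr : ∀ z (hz : G.Adj x z) z' (hz' : G.Adj x z'), z = z' → jv z hz = jv z' hz' := by
    rintro z hz z' hz' rfl; rfl
  -- the subtree quotient types
  let N : Fin t → Type _ := fun j =>
    Quot (RelT (G.induce (desc G x (u j))) ⟨u j, self_mem_desc G x (u j)⟩ k)
  -- transported subtree colorings
  let sub : SubT G x k → ∀ j, ∀ v ∈ C j,
      SubT (G.induce (desc G x (u j))) ⟨u j, self_mem_desc G x (u j)⟩ k := fun φ j v hv =>
    ⟨fun a => φ.1 ((ρ j v hv a : V)),
     distinguishes_transport (ρ j v hv) (hρroot j v hv) _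
       (distinguishes_restrict hG (hC1 j v hv) φ.2)⟩
  let cls : SubT G x k → ∀ j, ∀ v ∈ C j, N j := fun φ j v hv => Quot.mk _ (sub φ j v hv)
  -- injectivity of the class map on children
  have clsInj : ∀ (φ : SubT G x k) j v (hv : v ∈ C j) w (hw : w ∈ C j),
      cls φ j v hv = cls φ j w hw → v = w := by
    intro φ j v hv w hw h
    obtain ⟨τ, hτroot, hτcol⟩ := (relT_mk_eq _ _).mp h
    refine cls_inj hG (hC1 j v hv) (hC1 j w hw) φ.2
      (((ρ j v hv).symm.trans τ).trans (ρ j w hw)) ?_ ?_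
    · show ((ρ j w hw) (τ ((ρ j v hv).symm ⟨v, _⟩)) : V) = w
      rw [hρsymm j v hv, hτroot, hρrootc j w hw]
    · intro a
      have hb := hτcol ((ρ j v hv).symm a)
      show φ.1 ↑a = φ.1 ↑((ρ j w hw) (τ ((ρ j v hv).symm a)))
      simpa [sub] using hb
  have clsCard : ∀ (φ : SubT G x k) j,
      ((C j).attach.image (fun v => cls φ j v.1 v.2)).card = (C j).card := by
    intro φ j
    rw [Finset.card_image_of_injective _
      (fun v w h => Subtype.ext (clsInj φ j v.1 v.2 w.1 w.2 h)), Finset.card_attach]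
  -- the target of the classification map
  let Tgt := Fin k × ∀ j : Fin t, {s : Finset (N j) // s.card = (C j).card}
  let Φf : SubT G x k → Tgt := fun φ =>
    (φ.1 x, fun j => ⟨(C j).attach.image (fun v => cls φ j v.1 v.2), clsCard φ j⟩)
  -- moving a coloring by a root-fixing automorphism
  have hmove : ∀ (φ ψ : SubT G x k) (σ : G ≃g G), σ x = x → (∀ w, φ.1 w = ψ.1 (σ w)) →
      ∀ j v (hv : v ∈ C j), ∃ hv' : σ v ∈ C j, cls φ j v hv = cls ψ j (σ v) hv' := by
    intro φ ψ σ hσx hcomp j v hv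
    have hxv := hC1 j v hv
    have hxσv : G.Adj x (σ v) := child_map σ hσx hxv
    have hIso : RootedIso (G.induce (desc G x v)) (G.induce (desc G x (σ v)))
        ⟨v, self_mem_desc G x v⟩ ⟨σ v, self_mem_desc G x (σ v)⟩ :=
      ⟨restrictAut σ hσx v, Subtype.ext rfl⟩
    obtain ⟨j', hj'1, hj'2⟩ := hC2 (σ v) hxσv
    have hjj : σ v ∈ C j := by
      by_cases hne : j' = j
      · exact hne ▸ hj'1
      · exact absurd hIso (hC4 j j' (fun e => hne e.symm) v hv (σ v) hj'1)
    refine ⟨hjj, Quot.sound ⟨((ρ j v hv).trans (restrictAut σ hσx v)).trans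
      (ρ j (σ v) hjj).symm, ?_, ?_⟩⟩
    · show (ρ j (σ v) hjj).symm (restrictAut σ hσx v ((ρ j v hv) ⟨u j, _⟩)) = ⟨u j, _⟩
      rw [hρroot j v hv]
      have h1 : restrictAut σ hσx v ⟨v, self_mem_desc G x v⟩ =
          ⟨σ v, self_mem_desc G x (σ v)⟩ := Subtype.ext rfl
      rw [h1, hρsymm j (σ v) hjj]
    · intro b
      show φ.1 ↑((ρ j v hv) b) =
        ψ.1 ↑((ρ j (σ v) hjj) ((ρ j (σ v) hjj).symm (restrictAut σ hσx v ((ρ j v hv) b))))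
      rw [RelIso.apply_symm_apply]
      exact hcomp _
  have hresp : ∀ φ ψ : SubT G x k, RelT G x k φ ψ → Φf φ = Φf ψ := by
    rintro φ ψ ⟨σ, hσx, hcomp⟩
    have h1 : φ.1 x = ψ.1 x := by rw [hcomp x, hσx]
    refine Prod.ext h1 (funext fun j => Subtype.ext ?_)
    show (C j).attach.image (fun v => cls φ j v.1 v.2) =
      (C j).attach.image (fun v => cls ψ j v.1 v.2)
    refine Finset.eq_of_subset_of_card_le (fun q hq => ?_)
      (by rw [clsCard φ j, clsCard ψ j])
    obtain ⟨v, _, rfl⟩ := Finset.mem_image.mp hq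
    obtain ⟨hv', hcls⟩ := hmove φ ψ σ hσx hcomp j v.1 v.2
    rw [hcls]
    exact Finset.mem_image.mpr ⟨⟨σ v.1, hv'⟩, Finset.mem_attach _ _, rfl⟩
  have injΦ : ∀ φ ψ : SubT G x k, Φf φ = Φf ψ → RelT G x k φ ψ := by
    intro φ ψ h
    have hx1 : φ.1 x = ψ.1 x := congrArg Prod.fst h
    have himg : ∀ j, (C j).attach.image (fun v => cls φ j v.1 v.2) =
        (C j).attach.image (fun v => cls ψ j v.1 v.2) := fun j =>
      congrArg Subtype.val (congrFun (congrArg Prod.snd h) j)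
    have hm0 : ∀ j (v : V) (hv : v ∈ C j), ∃ w : {w // w ∈ C j},
        cls φ j v hv = cls ψ j w.1 w.2 := by
      intro j v hv
      have hmem : cls φ j v hv ∈ (C j).attach.image (fun v => cls ψ j v.1 v.2) := by
        rw [← himg j]
        exact Finset.mem_image_of_mem _ (Finset.mem_attach _ ⟨v, hv⟩)
      obtain ⟨w, _, hw⟩ := Finset.mem_image.mp hmem
      exact ⟨w, hw.symm⟩
    choose m hmcls using hm0
    have m_congr : ∀ j j' (e : j = j') (v : V) (hv : v ∈ C j) (hv' : v ∈ C j'),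
        (m j v hv).1 = (m j' v hv').1 := by rintro j j' rfl v hv hv'; rfl
    have hτ0 : ∀ j v (hv : v ∈ C j),
        RelT _ _ _ (sub φ j v hv) (sub ψ j (m j v hv).1 (m j v hv).2) :=
      fun j v hv => (relT_mk_eq _ _).mp (hmcls j v hv)
    choose τ hτroot hτcol using hτ0
    let Mv : ∀ v, G.Adj x v → V := fun v h => (m (jv v h) v (hjvmem v h)).1
    have hMvC : ∀ v (h : G.Adj x v), Mv v h ∈ C (jv v h) := fun v h =>
      (m (jv v h) v (hjvmem v h)).2
    have hMvchild : ∀ v (h : G.Adj x v), G.Adj x (Mv v h) := fun v h => hC1 _ _ (hMvC v h)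
    let Em : ∀ v (h : G.Adj x v), (G.induce (desc G x v)) ≃g (G.induce (desc G x (Mv v h))) :=
      fun v h => ((ρ (jv v h) v (hjvmem v h)).symm.trans (τ (jv v h) v (hjvmem v h))).trans
        (ρ (jv v h) (Mv v h) (hMvC v h))
    have hEmroot : ∀ v (h : G.Adj x v), ((Em v h) ⟨v, self_mem_desc G x v⟩ : V) = Mv v h := by
      intro v h
      show ((ρ _ _ _) ((τ _ _ _) ((ρ (jv v h) v (hjvmem v h)).symm ⟨v, _⟩)) : V) = _
      rw [hρsymm, hτroot, hρrootc]
    have hEmcol : ∀ v (h : G.Adj x v) (a : ↥(desc G x v)), φ.1 ↑a = ψ.1 ↑((Em v h) a) := by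
      intro v h a
      have hb := hτcol (jv v h) v (hjvmem v h) ((ρ (jv v h) v (hjvmem v h)).symm a)
      show φ.1 ↑a = ψ.1 ↑((ρ _ _ _) ((τ _ _ _) ((ρ (jv v h) v (hjvmem v h)).symm a)))
      simpa [sub] using hb
    have hMvinj : ∀ v (h : G.Adj x v) w (h' : G.Adj x w), Mv v h = Mv w h' → v = w := by
      intro v h w h' he
      have hj : jv v h = jv w h' := by
        have e1 : jv (Mv v h) (hMvchild v h) = jv v h := hjv_eq _ _ _ (hMvC v h)
        have e2 : jv (Mv w h') (hMvchild w h') = jv w h' := hjv_eq _ _ _ (hMvC w h')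
        rw [← e1, ← e2]
        exact jv_congr _ _ _ _ he
      have hw' : w ∈ C (jv v h) := hj ▸ hjvmem w h'
      have hMw : (m (jv v h) w hw').1 = Mv w h' := m_congr _ _ hj w hw' (hjvmem w h')
      have hsub : m (jv v h) v (hjvmem v h) = m (jv v h) w hw' :=
        Subtype.ext (he.trans hMw.symm)
      refine clsInj φ (jv v h) v (hjvmem v h) w hw' ?_
      rw [hmcls (jv v h) v (hjvmem v h), hmcls (jv v h) w hw']
      exact congrArg (fun z : {w // w ∈ C (jv v h)} => cls ψ (jv v h) z.1 z.2) hsub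
    set F : V → V := fun a => if hax : a = x then x
      else ↑(Em (par hG x a) (par_spec hG hax).1 ⟨a, (par_spec hG hax).2⟩) with hF
    have hFx : F x = x := dif_pos rfl
    have hFdesc : ∀ v (h : G.Adj x v) a (ha : a ∈ desc G x v), F a = ↑(Em v h ⟨a, ha⟩) := by
      intro v h a ha
      have hax : a ≠ x := mem_desc_ne_x hG h ha
      have hpar : par hG x a = v := par_eq hG h ha
      rw [hF]; simp only [dif_neg hax]
      subst hpar
      rfl
    have hFmem : ∀ v (h : G.Adj x v) a (ha : a ∈ desc G x v), F a ∈ desc G x (Mv v h) := by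
      intro v h a ha; rw [hFdesc v h a ha]; exact Subtype.coe_prop _
    have hFv : ∀ v (h : G.Adj x v), F v = Mv v h := fun v h => by
      rw [hFdesc v h v (self_mem_desc G x v), hEmroot v h]
    obtain ⟨σ, hσx, hσF⟩ := glue' hG x F hFx
      (fun v h => by rw [hFv v h]; exact hMvchild v h)
      (fun v h a ha => by rw [hFv v h]; exact hFmem v h a ha)
      (by
        intro a c hac
        by_cases ha : a = x <;> by_cases hc : c = x
        · rw [ha, hc]
        · have h1 := hFmem _ (par_spec hG hc).1 c (par_spec hG hc).2
          have h2 := mem_desc_ne_x hG (hMvchild _ (par_spec hG hc).1) h1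
          exact absurd (show F c = x by rw [← hac, ha, hFx]) h2
        · have h1 := hFmem _ (par_spec hG ha).1 a (par_spec hG ha).2
          have h2 := mem_desc_ne_x hG (hMvchild _ (par_spec hG ha).1) h1
          exact absurd (show F a = x by rw [hac, hc, hFx]) h2
        · have h1 := hFmem _ (par_spec hG ha).1 a (par_spec hG ha).2
          have h2 := hFmem _ (par_spec hG hc).1 c (par_spec hG hc).2
          have hMv : Mv (par hG x a) (par_spec hG ha).1 = Mv (par hG x c) (par_spec hG hc).1 := by
            by_contra hne
            exact (desc_disjoint hG (hMvchild _ _) (hMvchild _ _) hne (hac ▸ h1)) h2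
          have hpp : par hG x a = par hG x c :=
            hMvinj _ (par_spec hG ha).1 _ (par_spec hG hc).1 hMv
          have hc' : c ∈ desc G x (par hG x a) := by rw [hpp]; exact (par_spec hG hc).2
          rw [hFdesc _ (par_spec hG ha).1 a (par_spec hG ha).2,
            hFdesc _ (par_spec hG ha).1 c hc'] at hac
          have := (Em _ (par_spec hG ha).1).toEquiv.injective (Subtype.ext hac)
          exact congrArg Subtype.val this)
      (by
        intro a c hax hcx hpar
        have hc' : c ∈ desc G x (par hG x a) := by rw [hpar]; exact (par_spec hG hcx).2
        rw [hFdesc _ (par_spec hG hax).1 a (par_spec hG hax).2,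
          hFdesc _ (par_spec hG hax).1 c hc']
        exact ((Em _ (par_spec hG hax).1).map_rel_iff
          (a := ⟨a, (par_spec hG hax).2⟩) (b := ⟨c, hc'⟩)).symm)
    refine ⟨σ, hσx, fun w => ?_⟩
    by_cases hw : w = x
    · rw [hw, hσx]; exact hx1
    · rw [hσF w, hFdesc _ (par_spec hG hw).1 w (par_spec hG hw).2]
      exact hEmcol _ (par_spec hG hw).1 ⟨w, (par_spec hG hw).2⟩
  have surjΦ : ∀ tgt : Tgt, ∃ φ : SubT G x k, Φf φ = tgt := by
    rintro ⟨c, s⟩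
    have hcard : ∀ j, Fintype.card ↥(C j) = Fintype.card ↥((s j).1) := by
      intro j
      rw [Fintype.card_coe, Fintype.card_coe]
      exact ((s j).2).symm
    let eqv : ∀ j, ↥(C j) ≃ ↥((s j).1) := fun j => Fintype.equivOfCardEq (hcard j)
    let gv : ∀ j (v : V), v ∈ C j →
        SubT (G.induce (desc G x (u j))) ⟨u j, self_mem_desc G x (u j)⟩ k :=
      fun j v hv => Quot.out ((eqv j ⟨v, hv⟩).1)
    have hgv : ∀ j v (hv : v ∈ C j), Quot.mk _ (gv j v hv) = ((eqv j ⟨v, hv⟩).1 : N j) :=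
      fun j v hv => Quot.out_eq _
    set Ψ : V → Fin k := fun a => if hax : a = x then c else
      (gv (jv (par hG x a) (par_spec hG hax).1) (par hG x a)
        (hjvmem (par hG x a) (par_spec hG hax).1)).1
        ((ρ (jv (par hG x a) (par_spec hG hax).1) (par hG x a)
          (hjvmem (par hG x a) (par_spec hG hax).1)).symm ⟨a, (par_spec hG hax).2⟩) with hΨ
    have hΨx : Ψ x = c := dif_pos rfl
    have hΨdesc : ∀ j (v : V) (hv : v ∈ C j) a (ha : a ∈ desc G x v),
        Ψ a = (gv j v hv).1 ((ρ j v hv).symm ⟨a, ha⟩) := by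
      intro j v hv a ha
      have h := hC1 j v hv
      have hax : a ≠ x := mem_desc_ne_x hG h ha
      have hpar : par hG x a = v := par_eq hG h ha
      have hj : jv v h = j := hjv_eq v h j hv
      rw [hΨ]; simp only [dif_neg hax]
      subst hpar; subst hj
      rfl
    have hΨρ : ∀ j (v : V) (hv : v ∈ C j) b,
        Ψ ↑((ρ j v hv) b) = (gv j v hv).1 b := by
      intro j v hv b
      rw [hΨdesc j v hv _ (Subtype.coe_prop _)]
      have h2 : ((ρ j v hv).symm ⟨↑((ρ j v hv) b), Subtype.coe_prop _⟩) = b := by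
        rw [show (⟨(↑((ρ j v hv) b) : V), Subtype.coe_prop _⟩ : ↥(desc G x v)) = (ρ j v hv) b
          from Subtype.ext rfl]
        exact RelIso.symm_apply_apply _ _
      rw [h2]
    have hΨdist : Distinguishes G x Ψ := by
      intro σ hσx hσcol
      have hfix : ∀ v (h : G.Adj x v), σ v = v := by
        intro v h
        have hσv : G.Adj x (σ v) := child_map σ hσx h
        have hIso : RootedIso (G.induce (desc G x v)) (G.induce (desc G x (σ v)))
            ⟨v, self_mem_desc G x v⟩ ⟨σ v, self_mem_desc G x (σ v)⟩ :=
          ⟨restrictAut σ hσx v, Subtype.ext rfl⟩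
        have hσvC : σ v ∈ C (jv v h) := by
          by_contra hnot
          refine hC4 (jv v h) (jv (σ v) hσv) ?_ v (hjvmem v h) (σ v) (hjvmem (σ v) hσv) hIso
          intro e
          exact hnot (e ▸ hjvmem (σ v) hσv)
        have hrel : RelT _ _ _ (gv (jv v h) v (hjvmem v h)) (gv (jv v h) (σ v) hσvC) := by
          refine ⟨((ρ (jv v h) v (hjvmem v h)).trans (restrictAut σ hσx v)).trans
            (ρ (jv v h) (σ v) hσvC).symm, ?_, ?_⟩
          · show (ρ (jv v h) (σ v) hσvC).symm
              (restrictAut σ hσx v ((ρ (jv v h) v (hjvmem v h)) ⟨u (jv v h), _⟩)) = _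
            rw [hρroot]
            rw [show restrictAut σ hσx v ⟨v, self_mem_desc G x v⟩ =
              ⟨σ v, self_mem_desc G x (σ v)⟩ from Subtype.ext rfl]
            exact hρsymm (jv v h) (σ v) hσvC
          · intro b
            show (gv (jv v h) v (hjvmem v h)).1 b = (gv (jv v h) (σ v) hσvC).1
              ((ρ (jv v h) (σ v) hσvC).symm
                (restrictAut σ hσx v ((ρ (jv v h) v (hjvmem v h)) b)))
            rw [← hΨρ (jv v h) v (hjvmem v h) b, ← hΨρ (jv v h) (σ v) hσvC,
              RelIso.apply_symm_apply]
            exact (hσcol _).symm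
        have hq : ((eqv (jv v h) ⟨v, hjvmem v h⟩).1 : N (jv v h)) =
            ((eqv (jv v h) ⟨σ v, hσvC⟩).1 : N (jv v h)) := by
          rw [← hgv (jv v h) v (hjvmem v h), ← hgv (jv v h) (σ v) hσvC]
          exact Quot.sound hrel
        have := (eqv (jv v h)).injective (Subtype.ext hq)
        exact (congrArg Subtype.val this).symm
      intro w
      by_cases hw : w = x
      · rw [hw]; exact hσx
      · have h := (par_spec hG hw).1
        have hmem := (par_spec hG hw).2
        have hvfix : σ (par hG x w) = par hG x w := hfix _ h
        have hmemiff : ∀ z, z ∈ desc G x (par hG x w) ↔ σ z ∈ desc G x (par hG x w) := by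
          intro z
          conv_rhs => rw [← hvfix]
          exact (mem_desc_map σ hσx z _).symm
        have hτid := (gv (jv _ h) _ (hjvmem _ h)).2
          (((ρ (jv _ h) _ (hjvmem _ h)).trans (restrictIso σ hmemiff)).trans
            (ρ (jv _ h) _ (hjvmem _ h)).symm)
          (by
            show (ρ (jv _ h) _ (hjvmem _ h)).symm
              (restrictIso σ hmemiff ((ρ (jv _ h) _ (hjvmem _ h)) ⟨u (jv _ h), _⟩)) = _
            rw [hρroot]
            rw [show restrictIso σ hmemiff ⟨par hG x w, self_mem_desc G x _⟩ =
              ⟨par hG x w, self_mem_desc G x _⟩ from Subtype.ext hvfix]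
            exact hρsymm (jv _ h) _ (hjvmem _ h))
          (by
            intro b
            show (gv (jv _ h) _ (hjvmem _ h)).1
              ((ρ (jv _ h) _ (hjvmem _ h)).symm
                (restrictIso σ hmemiff ((ρ (jv _ h) _ (hjvmem _ h)) b))) =
              (gv (jv _ h) _ (hjvmem _ h)).1 b
            rw [← hΨρ (jv _ h) _ (hjvmem _ h) b, ← hΨρ (jv _ h) _ (hjvmem _ h),
              RelIso.apply_symm_apply]
            exact hσcol _)
        have hb := hτid ((ρ (jv _ h) _ (hjvmem _ h)).symm ⟨w, hmem⟩)
        simp only [RelIso.trans_apply] at hb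
        rw [RelIso.apply_symm_apply] at hb
        have hb2 := ((ρ (jv _ h) _ (hjvmem _ h)).symm).toEquiv.injective hb
        exact congrArg Subtype.val hb2
    refine ⟨⟨Ψ, hΨdist⟩, ?_⟩
    refine Prod.ext hΨx (funext fun j => Subtype.ext ?_)
    show (C j).attach.image (fun v => cls ⟨Ψ, hΨdist⟩ j v.1 v.2) = (s j).1
    have hcls : ∀ (v : ↥(C j)), cls ⟨Ψ, hΨdist⟩ j v.1 v.2 = ((eqv j v).1 : N j) := by
      intro v
      rw [← hgv j v.1 v.2]
      have hsg : sub ⟨Ψ, hΨdist⟩ j v.1 v.2 = gv j v.1 v.2 := by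
        apply Subtype.ext
        funext b
        show Ψ ↑((ρ j v.1 v.2) b) = (gv j v.1 v.2).1 b
        exact hΨρ j v.1 v.2 b
      show Quot.mk _ (sub ⟨Ψ, hΨdist⟩ j v.1 v.2) = Quot.mk _ (gv j v.1 v.2)
      rw [hsg]
    ext q
    simp only [Finset.mem_image]
    constructor
    · rintro ⟨v, -, rfl⟩
      rw [hcls v]
      exact ((eqv j v)).2
    · intro hq
      refine ⟨(eqv j).symm ⟨q, hq⟩, Finset.mem_attach _ _, ?_⟩
      rw [hcls]
      rw [Equiv.apply_symm_apply]
  have hbij : Function.Bijective (Quot.lift Φf hresp) := by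
    constructor
    · intro a b
      induction a using Quot.ind with | _ φ =>
      induction b using Quot.ind with | _ ψ =>
      intro h
      exact Quot.sound (injΦ φ ψ h)
    · intro tgt
      obtain ⟨φ, hφ⟩ := surjΦ tgt
      exact ⟨Quot.mk _ φ, hφ⟩
  rw [DCount_eq, Nat.card_eq_of_bijective _ hbij]
  show Nat.card Tgt = _
  rw [Nat.card_prod, Nat.card_pi]
  congr 1
  · exact Nat.card_eq_fintype_card.trans (Fintype.card_fin k)
  refine Finset.prod_congr rfl (fun j _ => ?_)
  rw [card_finset_subtype]
  rfl
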